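/- For every real number p > 0 and every natural number n > 2, the binomial sum S_p(n) = ∑_{j=1}^{n} j^p · C(n+j, j) satisfies S_p(n) < (n^p · (2n+1)/(n+1) + n) · (2n+2)^n / (n+1)!. -/

import Mathlib

open Finset

private lemma prod_asc (n : ℕ) : ∀ k : ℕ, ∏ i ∈ range k, (n + 1 + i) = (n + 1).ascFactorial k
  | 0 => by simp
  | k + 1 => by
      rw [prod_range_succ, prod_asc n k, Nat.ascFactorial_succ]
      ring

private lemma prod_shift_fact (n : ℕ) : ∏ i ∈ range n, (i + 2) = (n + 1).factorial := by
  have := Finset.prod_range_succ' (fun i => i + 1) n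
  rw [Finset.prod_range_add_one_eq_factorial] at this
  simpa using this.symm

private lemma key1 (n : ℕ) : (2 * n).choose n * (n + 1).factorial ≤ (2 * n + 2) ^ n := by
  have hterm : ∀ i ∈ range n, (n + 1 + i) * (i + 2) ≤ (2 * n + 2) * (i + 1) := by
    intro i hi
    have hi' : i + 1 ≤ n := Finset.mem_range.mp hi
    nlinarith
  have hprod := Finset.prod_le_prod' hterm
  rw [Finset.prod_mul_distrib, Finset.prod_mul_distrib, prod_asc, prod_shift_fact,
    Finset.prod_const, Finset.card_range, Finset.prod_range_add_one_eq_factorial] at hprod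
  -- hprod : (n+1).ascFactorial n * (n+1)! ≤ (2n+2)^n * n!
  have hfa : n.factorial * (n + 1).ascFactorial n = (2 * n).factorial := by
    rw [Nat.factorial_mul_ascFactorial, two_mul]
  have hch : (2 * n).choose n * n.factorial * n.factorial = (2 * n).factorial := by
    have h := Nat.choose_mul_factorial_mul_factorial (show n ≤ 2 * n by omega)
    simpa [show 2 * n - n = n by omega] using h
  have hpos : 0 < n.factorial := Nat.factorial_pos n
  have h2 : (2 * n).choose n * (n + 1).factorial * (n.factorial * n.factorial)
      ≤ (2 * n + 2) ^ n * (n.factorial * n.factorial) := by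
    calc (2 * n).choose n * (n + 1).factorial * (n.factorial * n.factorial)
        = (2 * n).factorial * (n + 1).factorial := by rw [← hch]; ring
      _ = n.factorial * ((n + 1).ascFactorial n * (n + 1).factorial) := by
          rw [← hfa]; ring
      _ ≤ n.factorial * ((2 * n + 2) ^ n * n.factorial) := Nat.mul_le_mul_left _ hprod
      _ = (2 * n + 2) ^ n * (n.factorial * n.factorial) := by ring
  exact Nat.le_of_mul_le_mul_right h2 (Nat.mul_pos hpos hpos)

private lemma key2 (n : ℕ) :
    ∑ j ∈ Icc 1 n, (n + j).choose j ≤ (2 * n + 1).choose (n + 1) := by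
  have h1 : ∑ j ∈ Icc 1 n, (n + j).choose j = ∑ i ∈ Icc (n + 1) (n + n), i.choose n := by
    rw [← Finset.map_add_left_Icc, Finset.sum_map]
    simp only [addLeftEmbedding_apply]
    exact Finset.sum_congr rfl fun j _ => Nat.choose_symm_add.symm
  rw [h1]
  calc ∑ i ∈ Icc (n + 1) (n + n), i.choose n
      ≤ ∑ i ∈ Icc n (n + n), i.choose n :=
        Finset.sum_le_sum_of_subset (Finset.Icc_subset_Icc_left (by omega))
    _ = (n + n + 1).choose (n + 1) := Nat.sum_Icc_choose _ _
    _ = (2 * n + 1).choose (n + 1) := by rw [two_mul]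

/-- For every real `p > 0` and natural `n > 2`, the binomial sum
`S_p(n) = ∑_{j=1}^n j^p * C(n+j, j)` satisfies
`S_p(n) < (n^p * (2n+1)/(n+1) + n) * (2n+2)^n / (n+1)!`. -/
theorem binomial_sum_upper_bound_simple (p : ℝ) (hp : 0 < p) (n : ℕ) (hn : 2 < n) :
    ∑ j ∈ Finset.Icc 1 n, (j : ℝ) ^ p * (Nat.choose (n + j) j : ℝ) <
      ((n : ℝ) ^ p * ((2 * n + 1) / (n + 1)) + n) * (2 * n + 2 : ℝ) ^ n /
        (Nat.factorial (n + 1) : ℝ) := by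
  have hn0 : (0 : ℝ) < n := by positivity
  have hnp : (0 : ℝ) < (n : ℝ) ^ p := Real.rpow_pos_of_pos hn0 p
  have hfpos : (0 : ℝ) < ((n + 1).factorial : ℝ) := by
    exact_mod_cast Nat.factorial_pos (n + 1)
  have hn1 : (0 : ℝ) < (n : ℝ) + 1 := by positivity
  have hpow : (0 : ℝ) < (2 * (n : ℝ) + 2) ^ n := by positivity
  -- step 1: bound each term
  have step1 : ∑ j ∈ Finset.Icc 1 n, (j : ℝ) ^ p * (Nat.choose (n + j) j : ℝ)
      ≤ (n : ℝ) ^ p * ((∑ j ∈ Icc 1 n, (n + j).choose j : ℕ) : ℝ) := by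
    push_cast
    rw [Finset.mul_sum]
    refine Finset.sum_le_sum fun j hj => ?_
    have hj' := Finset.mem_Icc.mp hj
    have hjn : (j : ℝ) ≤ (n : ℝ) := by exact_mod_cast hj'.2
    have hj0 : (0 : ℝ) ≤ (j : ℝ) := by positivity
    exact mul_le_mul_of_nonneg_right (Real.rpow_le_rpow hj0 hjn hp.le) (by positivity)
  -- step 2: hockey stick
  have step2 : ((∑ j ∈ Icc 1 n, (n + j).choose j : ℕ) : ℝ)
      ≤ ((2 * n + 1).choose (n + 1) : ℝ) := by exact_mod_cast key2 n
  -- step 3: bound central-type binomial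
  have hnat : (2 * n + 1).choose (n + 1) * ((n + 1) * (n + 1).factorial)
      ≤ (2 * n + 1) * (2 * n + 2) ^ n := by
    have hs : (2 * n + 1) * (2 * n).choose n = (2 * n + 1).choose (n + 1) * (n + 1) := by
      exact_mod_cast Nat.add_one_mul_choose_eq (2 * n) n
    calc (2 * n + 1).choose (n + 1) * ((n + 1) * (n + 1).factorial)
        = (2 * n + 1).choose (n + 1) * (n + 1) * (n + 1).factorial := by ring
      _ = (2 * n + 1) * ((2 * n).choose n * (n + 1).factorial) := by rw [← hs]; ring
      _ ≤ (2 * n + 1) * (2 * n + 2) ^ n := Nat.mul_le_mul_left _ (key1 n)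
  have step3 : ((2 * n + 1).choose (n + 1) : ℝ)
      ≤ (2 * (n : ℝ) + 1) * (2 * (n : ℝ) + 2) ^ n / (((n : ℝ) + 1) * ((n + 1).factorial : ℝ)) := by
    rw [le_div_iff₀ (by positivity)]
    exact_mod_cast hnat
  -- assemble
  have hchain : ∑ j ∈ Finset.Icc 1 n, (j : ℝ) ^ p * (Nat.choose (n + j) j : ℝ)
      ≤ (n : ℝ) ^ p *
        ((2 * (n : ℝ) + 1) * (2 * (n : ℝ) + 2) ^ n / (((n : ℝ) + 1) * ((n + 1).factorial : ℝ))) :=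
    le_trans step1 (mul_le_mul_of_nonneg_left (le_trans step2 step3) hnp.le)
  have hrhs : ((n : ℝ) ^ p * ((2 * n + 1) / (n + 1)) + n) * (2 * n + 2 : ℝ) ^ n /
        (Nat.factorial (n + 1) : ℝ)
      = (n : ℝ) ^ p *
        ((2 * (n : ℝ) + 1) * (2 * (n : ℝ) + 2) ^ n / (((n : ℝ) + 1) * ((n + 1).factorial : ℝ)))
        + (n : ℝ) * (2 * (n : ℝ) + 2) ^ n / ((n + 1).factorial : ℝ) := by
    field_simp
  rw [hrhs]
  have hextra : 0 < (n : ℝ) * (2 * (n : ℝ) + 2) ^ n / ((n + 1).factorial : ℝ) := by positivity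
  linarith
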